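/- Let X be a uniquely arcwise connected continuum and let Y ⊆ X be either a tree, or the image of an oscillatory ray, or the image of a bi-sided-oscillatory line in X, with quasi-retraction r_Y : X → Y. If Z is an arcwise connected subset of Y, then r_Y⁻¹(Z) is an arcwise connected subset of X. -/
import Mathlib


/-- `A` is an arc in `X` joining `x` and `y`: the image of a continuous injection
from `[0,1]` sending `0` to `x` and `1` to `y`. -/
def IsArcBetween {X : Type*} [TopologicalSpace X] (A : Set X) (x y : X) : Prop :=
  ∃ f : unitInterval → X, Continuous f ∧ Function.Injective f ∧
    f 0 = x ∧ f 1 = y ∧ Set.range f = A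

/-- `A` is an arc in `X` (a subspace homeomorphic to `[0,1]`). -/
def IsArc {X : Type*} [TopologicalSpace X] (A : Set X) : Prop :=
  ∃ x y, IsArcBetween A x y

/-- `X` is uniquely arcwise connected: any two distinct points are joined by a unique arc. -/
def UniquelyArcwiseConnected (X : Type*) [TopologicalSpace X] : Prop :=
  ∀ x y : X, x ≠ y → ∃! A : Set X, IsArcBetween A x y

/-- A dendrite: a (metrizable) continuum which is locally connected and uniquely
arcwise connected. -/
def IsDendrite (X : Type*) [TopologicalSpace X] : Prop :=
  Nonempty X ∧ CompactSpace X ∧ ConnectedSpace X ∧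
    TopologicalSpace.MetrizableSpace X ∧ LocallyConnectedSpace X ∧
    UniquelyArcwiseConnected X

/-- A subset `Y` of `X` is a tree: it is a dendrite (with the subspace topology)
which is the union of finitely many arcs. -/
def IsTree {X : Type*} [TopologicalSpace X] (Y : Set X) : Prop :=
  IsDendrite Y ∧ ∃ (n : ℕ) (A : Fin n → Set X), (∀ i, IsArc (A i)) ∧ Y = ⋃ i, A i

/-- A subset `S` of `X` is arcwise connected: any two distinct points of `S`
are joined by an arc contained in `S`. -/
def ArcwiseConnectedSet {X : Type*} [TopologicalSpace X] (S : Set X) : Prop :=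
  ∀ x ∈ S, ∀ y ∈ S, x ≠ y → ∃ A : Set X, IsArcBetween A x y ∧ A ⊆ S

/-- The convex hull `[S]` of `S`: the intersection of all arcwise connected
subsets of `X` containing `S`. -/
def arcHull {X : Type*} [TopologicalSpace X] (S : Set X) : Set X :=
  ⋂₀ {C : Set X | S ⊆ C ∧ ArcwiseConnectedSet C}

/-- `Y` is the image of an oscillatory ray: a continuous injection `φ : [0, ∞) → X`
with image `Y` such that `⋂ n closure (φ [n, ∞))` contains at least two points. -/
def IsOscillatoryRaySet {X : Type*} [TopologicalSpace X] (Y : Set X) : Prop :=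
  ∃ φ : ℝ → X, ContinuousOn φ (Set.Ici 0) ∧ Set.InjOn φ (Set.Ici 0) ∧
    φ '' Set.Ici 0 = Y ∧
    ∃ u v : X, u ≠ v ∧
      ∀ n : ℕ, u ∈ closure (φ '' Set.Ici (n : ℝ)) ∧ v ∈ closure (φ '' Set.Ici (n : ℝ))

/-- `Y` is the image of a bi-sided-oscillatory line: a continuous injection
`ψ : (−∞, ∞) → X` with image `Y` such that both `⋂ n closure (ψ (−∞, −n])` and
`⋂ n closure (ψ [n, ∞))` contain at least two points. -/
def IsBiOscillatoryLineSet {X : Type*} [TopologicalSpace X] (Y : Set X) : Prop :=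
  ∃ ψ : ℝ → X, Continuous ψ ∧ Function.Injective ψ ∧ Set.range ψ = Y ∧
    (∃ u v : X, u ≠ v ∧
      ∀ n : ℕ, u ∈ closure (ψ '' Set.Iic (-(n : ℝ))) ∧
        v ∈ closure (ψ '' Set.Iic (-(n : ℝ)))) ∧
    (∃ u v : X, u ≠ v ∧
      ∀ n : ℕ, u ∈ closure (ψ '' Set.Ici (n : ℝ)) ∧ v ∈ closure (ψ '' Set.Ici (n : ℝ)))

/-- `y` is the quasi-retraction of `x` to `Y`: `y ∈ Y`, and either `x = y` (the case
`x ∈ Y`), or the arc `[x, y]` meets `Y` exactly in `{y}`. -/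
def QuasiRetractPt {X : Type*} [TopologicalSpace X] (Y : Set X) (x y : X) : Prop :=
  y ∈ Y ∧ (x = y ∨ ∃ A : Set X, IsArcBetween A x y ∧ A ∩ Y = {y})


namespace IsArcBetween

variable {X : Type*} [TopologicalSpace X] {A : Set X} {x y : X}

lemma left_mem (h : IsArcBetween A x y) : x ∈ A := by
  obtain ⟨f, _, _, h0, _, hr⟩ := h
  exact hr ▸ h0 ▸ Set.mem_range_self 0

lemma right_mem (h : IsArcBetween A x y) : y ∈ A := by
  obtain ⟨f, _, _, _, h1, hr⟩ := h
  exact hr ▸ h1 ▸ Set.mem_range_self 1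

lemma ne (h : IsArcBetween A x y) : x ≠ y := by
  obtain ⟨f, _, hi, h0, h1, _⟩ := h
  intro hxy
  have : (0 : unitInterval) = 1 := hi (by rw [h0, h1, hxy])
  exact zero_ne_one (congrArg Subtype.val this)

lemma symm (h : IsArcBetween A x y) : IsArcBetween A y x := by
  obtain ⟨f, hc, hi, h0, h1, hr⟩ := h
  refine ⟨f ∘ unitInterval.symm, hc.comp unitInterval.continuous_symm,
    hi.comp unitInterval.symm_bijective.injective, ?_, ?_, ?_⟩
  · simpa [unitInterval.symm_zero] using h1
  · simpa [unitInterval.symm_one] using h0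
  · rw [Set.range_comp, unitInterval.symm_bijective.surjective.range_eq, Set.image_univ, hr]

lemma isCompact (h : IsArcBetween A x y) : IsCompact A := by
  obtain ⟨f, hc, _, _, _, hr⟩ := h
  exact hr ▸ isCompact_range hc

lemma isClosed [T2Space X] (h : IsArcBetween A x y) : IsClosed A :=
  h.isCompact.isClosed

end IsArcBetween


section Subarc
variable {X : Type*} [TopologicalSpace X] {f : unitInterval → X}

lemma subarc_init (hc : Continuous f) (hi : Function.Injective f) (t : unitInterval)
    (hne : f 0 ≠ f t) :
    ∃ C, IsArcBetween C (f 0) (f t) ∧ C ⊆ Set.range f ∧ ∀ q ∈ C, ∃ s, s ≤ t ∧ q = f s := by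
  have ht0 : (t : ℝ) ≠ 0 := by
    intro h
    have : t = 0 := Subtype.ext h
    exact hne (by rw [this])
  have hmem : ∀ u : unitInterval, (u : ℝ) * t ∈ unitInterval := fun u =>
    ⟨mul_nonneg u.2.1 t.2.1, mul_le_one₀ u.2.2 t.2.1 t.2.2⟩
  set σ : unitInterval → unitInterval := fun u => ⟨(u : ℝ) * t, hmem u⟩ with hσ
  have hσc : Continuous σ := Continuous.subtype_mk (continuous_subtype_val.mul continuous_const) _
  have hσi : Function.Injective σ := by
    intro u v huv
    have : (u : ℝ) * t = (v : ℝ) * t := congrArg Subtype.val huv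
    exact Subtype.ext (mul_right_cancel₀ ht0 this)
  refine ⟨Set.range (f ∘ σ), ⟨f ∘ σ, hc.comp hσc, hi.comp hσi, ?_, ?_, rfl⟩, ?_, ?_⟩
  · show f (σ 0) = f 0
    congr 1; exact Subtype.ext (by simp [hσ])
  · show f (σ 1) = f t
    congr 1; exact Subtype.ext (by simp [hσ])
  · rintro q ⟨u, rfl⟩; exact Set.mem_range_self _
  · rintro q ⟨u, rfl⟩
    refine ⟨σ u, ?_, rfl⟩
    show (u : ℝ) * t ≤ t
    nlinarith [u.2.1, u.2.2, t.2.1, t.2.2]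

lemma subarc_final (hc : Continuous f) (hi : Function.Injective f) (t : unitInterval)
    (hne : f t ≠ f 1) :
    ∃ C, IsArcBetween C (f t) (f 1) ∧ C ⊆ Set.range f := by
  have ht1 : (t : ℝ) ≠ 1 := by
    intro h
    have : t = 1 := Subtype.ext h
    exact hne (by rw [this])
  have hmem : ∀ u : unitInterval, (t : ℝ) + (u : ℝ) * (1 - t) ∈ unitInterval := fun u =>
    ⟨by nlinarith [u.2.1, u.2.2, t.2.1, t.2.2], by nlinarith [u.2.1, u.2.2, t.2.1, t.2.2]⟩
  set σ : unitInterval → unitInterval := fun u => ⟨(t : ℝ) + (u : ℝ) * (1 - t), hmem u⟩ with hσ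
  have hσc : Continuous σ := Continuous.subtype_mk
    (continuous_const.add (continuous_subtype_val.mul continuous_const)) _
  have hσi : Function.Injective σ := by
    intro u v huv
    have h1 : (t : ℝ) + (u : ℝ) * (1 - t) = (t : ℝ) + (v : ℝ) * (1 - t) := congrArg Subtype.val huv
    have h2 : (1 : ℝ) - t ≠ 0 := by
      intro h; exact ht1 (by linarith)
    exact Subtype.ext (mul_right_cancel₀ h2 (by linarith))
  refine ⟨Set.range (f ∘ σ), ⟨f ∘ σ, hc.comp hσc, hi.comp hσi, ?_, ?_, rfl⟩, ?_⟩
  · show f (σ 0) = f t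
    congr 1; exact Subtype.ext (by simp [hσ])
  · show f (σ 1) = f 1
    congr 1; exact Subtype.ext (by simp [hσ])
  · rintro q ⟨u, rfl⟩; exact Set.mem_range_self _

end Subarc


lemma arc_concat {X : Type*} [TopologicalSpace X] {A B : Set X} {u v w : X}
    (hA : IsArcBetween A u v) (hB : IsArcBetween B v w) (hAB : A ∩ B = {v}) :
    IsArcBetween (A ∪ B) u w := by
  obtain ⟨f, hfc, hfi, hf0, hf1, hfr⟩ := hA
  obtain ⟨g, hgc, hgi, hg0, hg1, hgr⟩ := hB
  let γ₁ : Path u v := ⟨⟨f, hfc⟩, hf0, hf1⟩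
  let γ₂ : Path v w := ⟨⟨g, hgc⟩, hg0, hg1⟩
  let γ := γ₁.trans γ₂
  have hr : Set.range (⇑γ) = A ∪ B := by
    rw [show ⇑γ = ⇑(γ₁.trans γ₂) from rfl, Path.trans_range]
    show Set.range f ∪ Set.range g = A ∪ B
    rw [hfr, hgr]
  have key : ∀ s : unitInterval, ∀ h : (s : ℝ) ≤ 1/2,
      γ s = f ⟨2 * s, (unitInterval.mul_pos_mem_iff two_pos).2 ⟨s.2.1, h⟩⟩ := by
    intro s h
    rw [show γ = γ₁.trans γ₂ from rfl, Path.trans_apply,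
      dif_pos h]
    rfl
  have key2 : ∀ s : unitInterval, ∀ h : ¬ (s : ℝ) ≤ 1/2,
      γ s = g ⟨2 * s - 1, unitInterval.two_mul_sub_one_mem_iff.2 ⟨le_of_lt (by linarith [not_le.1 h]), s.2.2⟩⟩ := by
    intro s h
    rw [show γ = γ₁.trans γ₂ from rfl, Path.trans_apply,
      dif_neg h]
    rfl
  have hinj : Function.Injective (⇑γ) := by
    intro s t hst
    have hvmem : ∀ (s1 t1 : unitInterval), f s1 = g t1 → f s1 = v ∧ g t1 = v := by
      intro s1 t1 h
      have h1 : f s1 ∈ A ∩ B := ⟨hfr ▸ Set.mem_range_self _, h ▸ hgr ▸ Set.mem_range_self _⟩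
      rw [hAB] at h1
      exact ⟨h1, h ▸ h1⟩
    by_cases h1 : (s : ℝ) ≤ 1/2 <;> by_cases h2 : (t : ℝ) ≤ 1/2
    · rw [key s h1, key t h2] at hst
      have := congrArg Subtype.val (hfi hst)
      simp only at this
      exact Subtype.ext (by linarith)
    · rw [key s h1, key2 t h2] at hst
      obtain ⟨hl, hr'⟩ := hvmem _ _ hst
      rw [← hg0] at hr'
      have := congrArg Subtype.val (hgi hr')
      norm_num at this
      exact absurd (by linarith : (t : ℝ) ≤ 1/2) h2
    · rw [key2 s h1, key t h2] at hst
      obtain ⟨hl, hr'⟩ := hvmem _ _ hst.symm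
      rw [← hg0] at hr'
      have := congrArg Subtype.val (hgi hr')
      norm_num at this
      exact absurd (by linarith : (s : ℝ) ≤ 1/2) h1
    · rw [key2 s h1, key2 t h2] at hst
      have := congrArg Subtype.val (hgi hst)
      simp only at this
      exact Subtype.ext (by linarith)
  exact ⟨⇑γ, γ.continuous, hinj, γ.source, γ.target, hr⟩

lemma first_hit {X : Type*} [TopologicalSpace X] {A : Set X} {u v : X} {K : Set X}
    (hA : IsArcBetween A u v) (hK : IsClosed K) (hv : v ∈ K) (hu : u ∉ K) :
    ∃ c C, c ∈ K ∧ IsArcBetween C u c ∧ C ⊆ A ∧ C ∩ K = {c} := by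
  obtain ⟨f, hfc, hfi, hf0, hf1, hfr⟩ := hA
  set T : Set unitInterval := f ⁻¹' K with hT
  have hTc : IsCompact (Subtype.val '' T) := by
    have : IsClosed T := hK.preimage hfc
    exact (this.isCompact).image continuous_subtype_val
  have hTne : (Subtype.val '' T).Nonempty := ⟨1, ⟨1, by simp [hT, hf1, hv], rfl⟩⟩
  obtain ⟨t0', ht0'mem, ht0'lb⟩ := hTc.exists_isLeast hTne
  obtain ⟨t0, ht0T, ht0v⟩ := ht0'mem
  have hne : f 0 ≠ f t0 := by
    intro h
    exact hu (hf0 ▸ h ▸ ht0T)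
  obtain ⟨C, hCarc, hCsub, hCmem⟩ := subarc_init hfc hfi t0 hne
  refine ⟨f t0, C, ht0T, hf0 ▸ hCarc, hfr ▸ hCsub, ?_⟩
  apply Set.eq_singleton_iff_unique_mem.2
  constructor
  · refine ⟨?_, ht0T⟩
    obtain ⟨g, _, _, _, hg1, hgr⟩ := hCarc
    exact hgr ▸ hg1 ▸ Set.mem_range_self 1
  · rintro q ⟨hqC, hqK⟩
    obtain ⟨s, hs, rfl⟩ := hCmem q hqC
    have : (t0 : ℝ) ≤ (s : ℝ) := ht0v ▸ ht0'lb ⟨s, hqK, rfl⟩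
    have : s = t0 := le_antisymm hs (by exact_mod_cast this)
    rw [this]

section YArc
variable {X : Type*} [TopologicalSpace X] {Y : Set X}

/-- affine segment arc for maps defined on a subset of ℝ -/
lemma segment_arc {φ : ℝ → X} {S : Set ℝ} (hc : ContinuousOn φ S) (hi : Set.InjOn φ S)
    (hconv : Convex ℝ S) {s t : ℝ} (hs : s ∈ S) (ht : t ∈ S) (hne : φ s ≠ φ t) :
    ∃ A, IsArcBetween A (φ s) (φ t) ∧ A ⊆ φ '' S := by
  have hst : s ≠ t := fun h => hne (by rw [h])
  have hmem : ∀ u : unitInterval, s + (u : ℝ) * (t - s) ∈ S := by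
    intro u
    have := hconv hs ht (by linarith [u.2.2] : (0:ℝ) ≤ 1 - u) u.2.1 (by ring)
    convert this using 1
    simp [smul_eq_mul]
    ring
  set σ : unitInterval → ℝ := fun u => s + (u : ℝ) * (t - s) with hσ
  have hσc : Continuous σ := continuous_const.add (continuous_subtype_val.mul continuous_const)
  refine ⟨Set.range (φ ∘ σ), ⟨φ ∘ σ, hc.comp_continuous hσc hmem, ?_, ?_, ?_, rfl⟩, ?_⟩
  · intro u u' h
    have := hi (hmem u) (hmem u') h
    have hts : t - s ≠ 0 := fun h => hst (by linarith)
    have : (u : ℝ) * (t - s) = (u' : ℝ) * (t - s) := by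
      have := congrArg (fun z => z - s) this
      simpa [hσ] using this
    exact Subtype.ext (mul_right_cancel₀ hts this)
  · show φ (σ 0) = φ s
    congr 1
    simp [hσ]
  · show φ (σ 1) = φ t
    congr 1
    simp [hσ]
  · rintro q ⟨u, rfl⟩
    exact ⟨σ u, hmem u, rfl⟩

lemma tree_arcwise (h : IsTree Y) : ArcwiseConnectedSet Y := by
  obtain ⟨⟨-, -, -, -, -, huac⟩, -⟩ := h
  intro y1 hy1 y2 hy2 hne
  have hne' : (⟨y1, hy1⟩ : Y) ≠ ⟨y2, hy2⟩ := fun h => hne (congrArg Subtype.val h)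
  obtain ⟨A, ⟨f, hfc, hfi, hf0, hf1, hfr⟩, -⟩ := huac ⟨y1, hy1⟩ ⟨y2, hy2⟩ hne'
  refine ⟨Set.range (Subtype.val ∘ f), ⟨Subtype.val ∘ f,
    continuous_subtype_val.comp hfc, Subtype.val_injective.comp hfi,
    by simp [hf0], by simp [hf1], rfl⟩, ?_⟩
  rintro q ⟨u, rfl⟩
  exact (f u).2

lemma ray_arcwise (h : IsOscillatoryRaySet Y) : ArcwiseConnectedSet Y := by
  obtain ⟨φ, hc, hi, hY, -⟩ := h
  intro y1 hy1 y2 hy2 hne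
  rw [← hY] at hy1 hy2
  obtain ⟨s, hs, rfl⟩ := hy1
  obtain ⟨t, ht, rfl⟩ := hy2
  obtain ⟨A, hA, hAs⟩ := segment_arc hc hi (convex_Ici 0) hs ht hne
  exact ⟨A, hA, hY ▸ hAs⟩

lemma line_arcwise (h : IsBiOscillatoryLineSet Y) : ArcwiseConnectedSet Y := by
  obtain ⟨ψ, hc, hi, hY, -⟩ := h
  intro y1 hy1 y2 hy2 hne
  rw [← hY] at hy1 hy2
  obtain ⟨s, rfl⟩ := hy1
  obtain ⟨t, rfl⟩ := hy2
  obtain ⟨A, hA, hAs⟩ := segment_arc (hc.continuousOn : ContinuousOn ψ Set.univ)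
    (hi.injOn) convex_univ trivial trivial hne
  refine ⟨A, hA, ?_⟩
  rw [← hY, ← Set.image_univ]
  exact hAs

end YArc


lemma quasi_fix {X : Type*} [TopologicalSpace X] {Y : Set X} {p q : X}
    (h : QuasiRetractPt Y p q) (hp : p ∈ Y) : q = p := by
  obtain ⟨hqY, (rfl | ⟨A, hA, hAY⟩)⟩ := h
  · rfl
  · have hm : p ∈ A ∩ Y := ⟨hA.left_mem, hp⟩
    rw [hAY] at hm
    exact (Set.mem_singleton_iff.1 hm).symm

lemma quasi_unique {X : Type*} [TopologicalSpace X] (hX : UniquelyArcwiseConnected X)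
    {Y : Set X} (hYc : ArcwiseConnectedSet Y) {p y1 y2 : X}
    (h1 : QuasiRetractPt Y p y1) (h2 : QuasiRetractPt Y p y2) : y1 = y2 := by
  by_cases hp : p ∈ Y
  · rw [quasi_fix h1 hp, quasi_fix h2 hp]
  · obtain ⟨hy1Y, (rfl | ⟨A1, hA1, hA1Y⟩)⟩ := h1
    · exact absurd hy1Y hp
    obtain ⟨hy2Y, (rfl | ⟨A2, hA2, hA2Y⟩)⟩ := h2
    · exact absurd hy2Y hp
    by_contra hne
    obtain ⟨B, hB, hBY⟩ := hYc y1 hy1Y y2 hy2Y hne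
    have hA1B : A1 ∩ B = {y1} := by
      apply Set.eq_singleton_iff_unique_mem.2
      refine ⟨⟨hA1.right_mem, hB.left_mem⟩, ?_⟩
      rintro q ⟨hq1, hqB⟩
      have hqm : q ∈ A1 ∩ Y := ⟨hq1, hBY hqB⟩
      rwa [hA1Y] at hqm
    have hC : IsArcBetween (A1 ∪ B) p y2 := arc_concat hA1 hB hA1B
    have hpy2 : p ≠ y2 := fun h => hp (h ▸ hy2Y)
    obtain ⟨A, hA, hAu⟩ := hX p y2 hpy2
    have e1 : A1 ∪ B = A2 := (hAu _ hC).trans (hAu _ hA2).symm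
    have hy1m : y1 ∈ A2 ∩ Y := ⟨e1 ▸ (Set.mem_union_right _ hB.left_mem), hy1Y⟩
    rw [hA2Y] at hy1m
    exact hne hy1m

lemma branch {X : Type*} [TopologicalSpace X] [T2Space X]
    (hX : UniquelyArcwiseConnected X) {Y : Set X}
    (hYc : ArcwiseConnectedSet Y) (r : X → X) (hr : ∀ x, QuasiRetractPt Y x (r x)) (x : X) :
    ∃ A : Set X, x ∈ A ∧ r x ∈ A ∧ (∀ p ∈ A, r p = r x) ∧ A ∩ Y = {r x} ∧ IsClosed A ∧
      (∀ w ∈ A, w ≠ x → ∃ C, IsArcBetween C x w ∧ C ⊆ A) := by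
  by_cases hxy : x = r x
  · have hxY : x ∈ Y := hxy ▸ (hr x).1
    refine ⟨{x}, rfl, by rw [← hxy]; rfl, ?_, ?_, isClosed_singleton, ?_⟩
    · intro p hp
      rw [Set.mem_singleton_iff] at hp
      rw [hp]
    · rw [← hxy]
      exact Set.inter_eq_left.2 (Set.singleton_subset_iff.2 hxY)
    · intro w hw hwx
      exact absurd (Set.mem_singleton_iff.1 hw) hwx
  · obtain ⟨hrY, (h | ⟨A, hA, hAY⟩)⟩ := hr x
    · exact absurd h hxy
    have hA' := hA
    obtain ⟨f, hfc, hfi, hf0, hf1, hfr⟩ := hA'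
    refine ⟨A, hA.left_mem, hA.right_mem, ?_, hAY, hA.isClosed, ?_⟩
    · intro p hp
      have hqr : QuasiRetractPt Y p (r x) := by
        by_cases hpr : p = r x
        · exact ⟨hrY, Or.inl hpr⟩
        · rw [← hfr] at hp
          obtain ⟨t, rfl⟩ := hp
          have hne : f t ≠ f 1 := by rw [hf1]; exact hpr
          obtain ⟨C, hC, hCs⟩ := subarc_final hfc hfi t hne
          rw [hf1] at hC
          refine ⟨hrY, Or.inr ⟨C, hC, ?_⟩⟩
          apply Set.eq_singleton_iff_unique_mem.2
          refine ⟨⟨hC.right_mem, hrY⟩, ?_⟩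
          rintro q ⟨hqC, hqY⟩
          have hqm : q ∈ A ∩ Y := ⟨hfr ▸ hCs hqC, hqY⟩
          rwa [hAY] at hqm
      exact quasi_unique hX hYc (hr p) hqr
    · intro w hw hwx
      rw [← hfr] at hw
      obtain ⟨t, rfl⟩ := hw
      have hne : f 0 ≠ f t := by rw [hf0]; exact fun h => hwx h.symm
      obtain ⟨C, hC, hCs, -⟩ := subarc_init hfc hfi t hne
      rw [hf0] at hC
      exact ⟨C, hC, hfr ▸ hCs⟩

/-- **Lemma 2.12.** Let `X` be a uniquely arcwise connected continuum and `Y ⊆ X` a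
tree, the image of an oscillatory ray, or the image of a bi-sided-oscillatory line,
with quasi-retraction `r = r_Y : X → Y`. If `Z` is an arcwise connected subset of `Y`,
then `r⁻¹(Z)` is arcwise connected. -/
theorem quasiRetraction_preimage_arcwiseConnected
    {X : Type*} [MetricSpace X] [CompactSpace X] [ConnectedSpace X] [Nonempty X]
    (hX : UniquelyArcwiseConnected X) (Y : Set X)
    (hY : IsTree Y ∨ IsOscillatoryRaySet Y ∨ IsBiOscillatoryLineSet Y)
    (r : X → X) (hr : ∀ x : X, QuasiRetractPt Y x (r x))
    (Z : Set X) (hZY : Z ⊆ Y) (hZ : ArcwiseConnectedSet Z) :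
    ArcwiseConnectedSet (r ⁻¹' Z) := by
  have hYc : ArcwiseConnectedSet Y := by
    rcases hY with h | h | h
    exacts [tree_arcwise h, ray_arcwise h, line_arcwise h]
  intro x hx y hy hxy
  obtain ⟨Ax, hxAx, haAx, hrAx, hAxY, hAxcl, hAxsub⟩ := branch hX hYc r hr x
  obtain ⟨Ay, hyAy, hbAy, hrAy, hAyY, hAycl, hAysub⟩ := branch hX hYc r hr y
  have hxZ : r x ∈ Z := hx
  have hyZ : r y ∈ Z := hy
  obtain ⟨B, hBZ, haB, hbB, hBcl, hBsub⟩ :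
      ∃ B : Set X, B ⊆ Z ∧ r x ∈ B ∧ r y ∈ B ∧ IsClosed B ∧
        (∀ w ∈ B, w ≠ r x → ∃ C, IsArcBetween C (r x) w ∧ C ⊆ B) := by
    by_cases hab : r x = r y
    · refine ⟨{r x}, Set.singleton_subset_iff.2 hxZ, rfl,
        Set.mem_singleton_iff.2 hab.symm, isClosed_singleton, ?_⟩
      intro w hw hwx
      exact absurd (Set.mem_singleton_iff.1 hw) hwx
    · obtain ⟨B, hB, hBZ⟩ := hZ (r x) hxZ (r y) hyZ hab
      have hB' := hB
      obtain ⟨g, hgc, hgi, hg0, hg1, hgr⟩ := hB'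
      refine ⟨B, hBZ, hB.left_mem, hB.right_mem, hB.isClosed, ?_⟩
      intro w hw hwa
      rw [← hgr] at hw
      obtain ⟨t, rfl⟩ := hw
      have hne : g 0 ≠ g t := by rw [hg0]; exact fun h => hwa h.symm
      obtain ⟨C, hC, hCs, -⟩ := subarc_init hgc hgi t hne
      rw [hg0] at hC
      exact ⟨C, hC, hgr ▸ hCs⟩
  set W := Ax ∪ B with hWdef
  have hWZ : W ⊆ r ⁻¹' Z := by
    rintro p (hp | hp)
    · exact Set.mem_preimage.2 (by rw [hrAx p hp]; exact hxZ)
    · have hpY : p ∈ Y := hZY (hBZ hp)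
      have hfix : r p = p := quasi_fix (hr p) hpY
      exact Set.mem_preimage.2 (by rw [hfix]; exact hBZ hp)
  have hAyZ : Ay ⊆ r ⁻¹' Z := fun p hp =>
    Set.mem_preimage.2 (by rw [hrAy p hp]; exact hyZ)
  have hWsub : ∀ w ∈ W, w ≠ x → ∃ C, IsArcBetween C x w ∧ C ⊆ W := by
    rintro w (hw | hw) hwx
    · obtain ⟨C, h1, h2⟩ := hAxsub w hw hwx
      exact ⟨C, h1, h2.trans Set.subset_union_left⟩
    · by_cases hxa : x = r x
      · by_cases hwa : w = r x
        · exact absurd (hwa.trans hxa.symm) hwx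
        · obtain ⟨C, h1, h2⟩ := hBsub w hw hwa
          rw [← hxa] at h1
          exact ⟨C, h1, h2.trans Set.subset_union_right⟩
      · by_cases hwa : w = r x
        · obtain ⟨C, h1, h2⟩ := hAxsub (r x) haAx (fun h => hxa h.symm)
          rw [← hwa] at h1
          exact ⟨C, h1, h2.trans Set.subset_union_left⟩
        · obtain ⟨C1, h11, h12⟩ := hAxsub (r x) haAx (fun h => hxa h.symm)
          obtain ⟨C2, h21, h22⟩ := hBsub w hw hwa
          have hint : C1 ∩ C2 = {r x} := by
            apply Set.eq_singleton_iff_unique_mem.2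
            refine ⟨⟨h11.right_mem, h21.left_mem⟩, ?_⟩
            rintro q ⟨hq1, hq2⟩
            have hqm : q ∈ Ax ∩ Y := ⟨h12 hq1, hZY (hBZ (h22 hq2))⟩
            rwa [hAxY] at hqm
          exact ⟨C1 ∪ C2, arc_concat h11 h21 hint,
            Set.union_subset (h12.trans Set.subset_union_left)
              (h22.trans Set.subset_union_right)⟩
  by_cases hyW : y ∈ W
  · obtain ⟨C, h1, h2⟩ := hWsub y hyW (Ne.symm hxy)
    exact ⟨C, h1, h2.trans hWZ⟩
  · have hbW : r y ∈ W := Set.mem_union_right _ hbB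
    have hyb : y ≠ r y := fun h => hyW (h ▸ hbW)
    obtain ⟨Ay', hAy'arc, hAy'sub⟩ := hAysub (r y) hbAy (fun h => hyb h.symm)
    have hWcl : IsClosed W := hAxcl.union hBcl
    obtain ⟨c, C2, hcW, hC2arc, hC2sub, hC2int⟩ := first_hit hAy'arc hWcl hbW hyW
    by_cases hcx : c = x
    · subst hcx
      exact ⟨C2, hC2arc.symm, (hC2sub.trans hAy'sub).trans hAyZ⟩
    · obtain ⟨C1, h11, h12⟩ := hWsub c hcW hcx
      have hint : C1 ∩ C2 = {c} := by
        apply Set.eq_singleton_iff_unique_mem.2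
        refine ⟨⟨h11.right_mem, hC2arc.right_mem⟩, ?_⟩
        rintro q ⟨hq1, hq2⟩
        have hqm : q ∈ C2 ∩ W := ⟨hq2, h12 hq1⟩
        rwa [hC2int] at hqm
      exact ⟨C1 ∪ C2, arc_concat h11 hC2arc.symm hint,
        Set.union_subset (h12.trans hWZ) ((hC2sub.trans hAy'sub).trans hAyZ)⟩
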